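/- Any n×n real symmetric positive definite matrix S is congruent to a positive diagonal matrix by an indefinite orthogonal matrix: there exist V with Vᵀ I_{p,q} V = I_{p,q} and a positive diagonal D such that S = Vᵀ D V. -/

import Mathlib

open Matrix

section Helpers

private lemma aux_li (n : ℕ) : LinearIndependent ℝ (fun i : Fin n => Pi.single i (1:ℝ)) := by
  have h := (Pi.basisFun ℝ (Fin n)).linearIndependent
  have he : ⇑(Pi.basisFun ℝ (Fin n)) = fun i : Fin n => Pi.single i (1:ℝ) := by
    funext i; exact Pi.basisFun_apply ℝ (Fin n) i
  rwa [he] at h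

private lemma span_single_finrank {n : ℕ} (P : Fin n → Prop) [DecidablePred P] :
    Module.finrank ℝ (Submodule.span ℝ
        (Set.range fun i : {i // P i} => (Pi.single (i : Fin n) (1:ℝ) : Fin n → ℝ)))
      = Fintype.card {i // P i} := by
  have li : LinearIndependent ℝ (fun i : {i // P i} => (Pi.single (i : Fin n) (1:ℝ) : Fin n → ℝ)) :=
    (aux_li n).comp Subtype.val Subtype.val_injective
  rw [finrank_span_eq_card li]

private lemma mem_span_single {n : ℕ} (P : Fin n → Prop) {x : Fin n → ℝ}
    (hx : x ∈ Submodule.span ℝ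
      (Set.range fun i : {i // P i} => (Pi.single (i : Fin n) (1:ℝ) : Fin n → ℝ)))
    {j : Fin n} (hj : ¬ P j) : x j = 0 := by
  have hle : Submodule.span ℝ
        (Set.range fun i : {i // P i} => (Pi.single (i : Fin n) (1:ℝ) : Fin n → ℝ))
      ≤ LinearMap.ker (LinearMap.proj j : (Fin n → ℝ) →ₗ[ℝ] ℝ) := by
    rw [Submodule.span_le]
    rintro _ ⟨i, rfl⟩
    have hij : (i : Fin n) ≠ j := fun h => hj (h ▸ i.2)
    simp [LinearMap.mem_ker, Pi.single_eq_of_ne hij.symm]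
  simpa using hle hx

/-- Sylvester-type inequality: if the quadratic form of `diagonal d` is carried to that of
`diagonal e` by an invertible matrix `M`, the number of positive `d`-entries is at most
the number of positive `e`-entries. -/
private lemma count_pos_le {n : ℕ} (d e : Fin n → ℝ)
    [DecidablePred fun i => 0 < d i] [DecidablePred fun i => 0 < e i]
    (M : Matrix (Fin n) (Fin n) ℝ) (hM : IsUnit M.det)
    (h : ∀ x : Fin n → ℝ, ∑ i, d i * x i ^ 2 = ∑ i, e i * (M *ᵥ x) i ^ 2) :
    Fintype.card {i // 0 < d i} ≤ Fintype.card {i // 0 < e i} := by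
  by_contra hlt
  push_neg at hlt
  let E : (Fin n → ℝ) ≃ₗ[ℝ] (Fin n → ℝ) :=
    LinearEquiv.ofLinear (Matrix.toLin' M) (Matrix.toLin' M⁻¹)
      (by rw [← Matrix.toLin'_mul, Matrix.mul_nonsing_inv _ hM, Matrix.toLin'_one])
      (by rw [← Matrix.toLin'_mul, Matrix.nonsing_inv_mul _ hM, Matrix.toLin'_one])
  set U := Submodule.span ℝ
    (Set.range fun i : {i // 0 < d i} => (Pi.single (i : Fin n) (1:ℝ) : Fin n → ℝ))
  set W := Submodule.span ℝ
    (Set.range fun i : {i // ¬ 0 < e i} => (Pi.single (i : Fin n) (1:ℝ) : Fin n → ℝ))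
  set N := W.map (E.symm : (Fin n → ℝ) →ₗ[ℝ] (Fin n → ℝ))
  have hU : Module.finrank ℝ U = Fintype.card {i // 0 < d i} := span_single_finrank _
  have hN : Module.finrank ℝ N = Fintype.card {i // ¬ 0 < e i} := by
    rw [← (E.symm.submoduleMap W).finrank_eq]; exact span_single_finrank _
  have htot : Module.finrank ℝ (Fin n → ℝ) = n := by simp
  have hcard : n < Module.finrank ℝ U + Module.finrank ℝ N := by
    rw [hU, hN, Fintype.card_subtype_compl]
    have h1 : Fintype.card {i // 0 < e i} ≤ Fintype.card (Fin n) := Fintype.card_subtype_le _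
    have h2 : Fintype.card (Fin n) = n := Fintype.card_fin n
    omega
  have hne : U ⊓ N ≠ ⊥ := by
    intro hbot
    have hsum := Submodule.finrank_sup_add_finrank_inf_eq U N
    rw [hbot] at hsum
    have hle := Submodule.finrank_le (U ⊔ N)
    rw [htot] at hle
    rw [finrank_bot] at hsum
    omega
  obtain ⟨x, hxmem, hx0⟩ := Submodule.exists_mem_ne_zero_of_ne_bot hne
  obtain ⟨hxU, hxN⟩ := hxmem
  have hpos : 0 < ∑ i, d i * x i ^ 2 := by
    obtain ⟨j, hj⟩ := Function.ne_iff.mp hx0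
    have hdj : 0 < d j := by
      by_contra hc
      exact hj (mem_span_single _ hxU hc)
    refine Finset.sum_pos' (fun i _ => ?_) ⟨j, Finset.mem_univ j, ?_⟩
    · by_cases hdi : 0 < d i
      · positivity
      · rw [mem_span_single _ hxU hdi]; simp
    · have hj' : x j ≠ 0 := by simpa using hj
      have hxj : (0:ℝ) < x j ^ 2 := by positivity
      exact mul_pos hdj hxj
  have hMx : M *ᵥ x ∈ W := by
    obtain ⟨w, hw, hwx⟩ := hxN
    have hEw : E x = w := by rw [← hwx]; simp
    have hEx : E x = M *ᵥ x := Matrix.toLin'_apply M x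
    rw [← hEx, hEw]; exact hw
  have hneg : ∑ i, e i * (M *ᵥ x) i ^ 2 ≤ 0 := by
    refine Finset.sum_nonpos (fun i _ => ?_)
    by_cases hei : 0 < e i
    · rw [mem_span_single _ hMx (not_not_intro hei)]; simp
    · push_neg at hei
      have hsq : (0:ℝ) ≤ (M *ᵥ x) i ^ 2 := sq_nonneg _
      exact mul_nonpos_of_nonpos_of_nonneg (by linarith) hsq
  rw [h x] at hpos
  linarith

/-- Quadratic form identity from a matrix congruence between diagonal matrices. -/
private lemma quad_congr {n : ℕ} (d e : Fin n → ℝ) (M : Matrix (Fin n) (Fin n) ℝ)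
    (h : Matrix.diagonal d = Mᵀ * Matrix.diagonal e * M) (x : Fin n → ℝ) :
    ∑ i, d i * x i ^ 2 = ∑ i, e i * (M *ᵥ x) i ^ 2 := by
  have h1 : x ⬝ᵥ (diagonal d *ᵥ x) = ∑ i, d i * x i ^ 2 := by
    simp [dotProduct, mulVec_diagonal]
    exact Finset.sum_congr rfl fun i _ => by ring
  have h2 : x ⬝ᵥ ((Mᵀ * diagonal e * M) *ᵥ x) = ∑ i, e i * (M *ᵥ x) i ^ 2 := by
    rw [mul_assoc, ← mulVec_mulVec, dotProduct_mulVec, vecMul_transpose, ← mulVec_mulVec]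
    simp [dotProduct, mulVec_diagonal]
    exact Finset.sum_congr rfl fun i _ => by ring
  rw [← h1, ← h2, h]

private lemma subtypeCongr_prop {n : ℕ} (P Q : Fin n → Prop) [DecidablePred P] [DecidablePred Q]
    (e₁ : {i // P i} ≃ {i // Q i}) (e₂ : {i // ¬ P i} ≃ {i // ¬ Q i}) (a : Fin n) :
    Q (Equiv.subtypeCongr e₁ e₂ a) ↔ P a := by
  by_cases h : P a
  · simp [Equiv.subtypeCongr, h, (e₁ ⟨a, h⟩).2]
  · simp [Equiv.subtypeCongr, h, (e₂ ⟨a, h⟩).2]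

private lemma card_lt_subtype (p q : ℕ) :
    Fintype.card {i : Fin (p + q) // (i : ℕ) < p} = p := by
  have e : {i : Fin (p + q) // (i : ℕ) < p} ≃ Fin p :=
    { toFun := fun i => ⟨i.1, i.2⟩
      invFun := fun k => ⟨⟨k.1, lt_of_lt_of_le k.2 (Nat.le_add_right p q)⟩, k.2⟩
      left_inv := fun i => by ext; rfl
      right_inv := fun k => by ext; rfl }
  rw [Fintype.card_congr e, Fintype.card_fin]

end Helpers

/-- A real symmetric positive definite matrix is congruent to a positive diagonal
matrix by an indefinite orthogonal matrix. -/
theorem posdef_congruent_diagonal_indefinite_orthogonal (p q : ℕ)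
    (S : Matrix (Fin (p + q)) (Fin (p + q)) ℝ) (hS : S.PosDef) :
    ∃ (V : Matrix (Fin (p + q)) (Fin (p + q)) ℝ) (d : Fin (p + q) → ℝ),
      Vᵀ * Matrix.diagonal (fun (i : Fin (p + q)) => if (i : ℕ) < p then (1 : ℝ) else -1) * V =
        Matrix.diagonal (fun (i : Fin (p + q)) => if (i : ℕ) < p then (1 : ℝ) else -1) ∧
      (∀ i, 0 < d i) ∧
      S = Vᵀ * Matrix.diagonal d * V := by
  classical
  set jf : Fin (p + q) → ℝ := fun i => if (i : ℕ) < p then (1 : ℝ) else -1 with hjf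
  set J : Matrix (Fin (p + q)) (Fin (p + q)) ℝ := Matrix.diagonal jf with hJdef
  have hjf1 : ∀ i, jf i * jf i = 1 := by
    intro i; by_cases h : (i : ℕ) < p <;> simp [hjf, h]
  have hjfne : ∀ i, jf i ≠ 0 := by
    intro i; by_cases h : (i : ℕ) < p <;> simp [hjf, h]
  have hJJ : J * J = 1 := by
    rw [hJdef, diagonal_mul_diagonal, show (fun i => jf i * jf i) = fun _ => (1:ℝ) from
      funext hjf1, diagonal_one]
  have hJT : Jᵀ = J := diagonal_transpose _
  have hdetJ : J.det ≠ 0 := by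
    rw [hJdef, det_diagonal]
    exact Finset.prod_ne_zero_iff.mpr fun i _ => hjfne i
  -- the positive square root of S
  obtain ⟨C, hC1, hC2⟩ : ∃ C : Matrix (Fin (p + q)) (Fin (p + q)) ℝ, C * C = S ∧ Cᵀ = C := by
    open scoped MatrixOrder in
    exact ⟨CFC.sqrt S, CFC.sqrt_mul_sqrt_self S hS.posSemidef.nonneg, by
      rw [← Matrix.conjTranspose_eq_transpose_of_trivial]; exact (CFC.sqrt_nonneg S).isSelfAdjoint⟩
  have hdetC : C.det ≠ 0 := by
    intro h0
    have hd : C.det * C.det = S.det := by rw [← det_mul, hC1]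
    rw [h0, mul_zero] at hd
    exact (hd ▸ hS.det_pos).false
  -- the symmetric matrix C * J * C and its spectral decomposition
  set A := C * J * C with hAdef
  have hA : A.IsHermitian := by
    rw [Matrix.IsHermitian, Matrix.conjTranspose_eq_transpose_of_trivial, hAdef,
      transpose_mul, transpose_mul, hC2, hJT, Matrix.mul_assoc]
  set μ := hA.eigenvalues with hμdef
  set U₀ := (hA.eigenvectorUnitary : Matrix (Fin (p + q)) (Fin (p + q)) ℝ) with hU₀def
  have hst : star U₀ = U₀ᵀ := by
    rw [Matrix.star_eq_conjTranspose, Matrix.conjTranspose_eq_transpose_of_trivial]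
  have hspec : A = U₀ * diagonal μ * U₀ᵀ := by
    have h := hA.spectral_theorem
    rw [Unitary.conjStarAlgAut_apply, ← hU₀def, hst] at h
    exact h
  have hU₀l : U₀ᵀ * U₀ = 1 := by
    rw [← hst]; exact Matrix.mem_unitaryGroup_iff'.mp hA.eigenvectorUnitary.2
  have hU₀r : U₀ * U₀ᵀ = 1 := by
    rw [← hst]; exact Matrix.mem_unitaryGroup_iff.mp hA.eigenvectorUnitary.2
  have hdetU₀ : U₀.det ≠ 0 := by
    intro h0
    have hd : U₀ᵀ.det * U₀.det = 1 := by rw [← det_mul, hU₀l, det_one]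
    rw [det_transpose, h0, mul_zero] at hd
    exact zero_ne_one hd
  -- congruence between `diagonal μ` and `J`
  set M₀ := C * U₀ with hM₀def
  have hdetM₀ : IsUnit M₀.det := by
    rw [hM₀def, det_mul]
    exact isUnit_iff_ne_zero.mpr (mul_ne_zero hdetC hdetU₀)
  have hcong : diagonal μ = M₀ᵀ * J * M₀ := by
    have e1 : M₀ᵀ * J * M₀ = U₀ᵀ * (C * J * C) * U₀ := by
      rw [hM₀def, transpose_mul, hC2]
      simp only [Matrix.mul_assoc]
    have e2 : U₀ᵀ * A * U₀ = diagonal μ := by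
      rw [hspec]
      simp only [Matrix.mul_assoc]
      rw [hU₀l, Matrix.mul_one, ← Matrix.mul_assoc, hU₀l, Matrix.one_mul]
    rw [e1, ← hAdef, e2]
  have hrev : J = (M₀⁻¹)ᵀ * diagonal μ * M₀⁻¹ := by
    rw [hcong]
    simp only [Matrix.mul_assoc]
    rw [Matrix.mul_nonsing_inv _ hdetM₀, Matrix.mul_one, ← Matrix.mul_assoc, ← transpose_mul,
      Matrix.mul_nonsing_inv _ hdetM₀, transpose_one, Matrix.one_mul]
  -- counting positive eigenvalues
  have hcount : Fintype.card {i // 0 < μ i} = p := by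
    have ha := count_pos_le μ jf M₀ hdetM₀ (quad_congr μ jf M₀ hcong)
    have hb := count_pos_le jf μ M₀⁻¹ (Matrix.isUnit_nonsing_inv_det _ hdetM₀)
      (quad_congr jf μ M₀⁻¹ hrev)
    have hcardj : Fintype.card {i // 0 < jf i} = Fintype.card {i : Fin (p + q) // (i : ℕ) < p} :=
      Fintype.card_congr (Equiv.subtypeEquivRight fun i => by
        by_cases h : (i : ℕ) < p <;> simp [hjf, h] <;> norm_num)
    rw [hcardj, card_lt_subtype p q] at ha hb
    omega
  have hμne : ∀ i, μ i ≠ 0 := by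
    have hdd : (diagonal μ).det ≠ 0 := by
      rw [hcong, det_mul, det_mul, det_transpose]
      exact mul_ne_zero (mul_ne_zero (isUnit_iff_ne_zero.mp hdetM₀) hdetJ)
        (isUnit_iff_ne_zero.mp hdetM₀)
    rw [det_diagonal] at hdd
    intro i h0
    exact hdd (Finset.prod_eq_zero (Finset.mem_univ i) h0)
  -- the permutation matching signs
  have hcard1 : Fintype.card {i : Fin (p + q) // (i : ℕ) < p} = Fintype.card {i // 0 < μ i} := by
    rw [card_lt_subtype p q, hcount]
  have hcard2 : Fintype.card {i : Fin (p + q) // ¬ (i : ℕ) < p}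
      = Fintype.card {i // ¬ 0 < μ i} := by
    rw [Fintype.card_subtype_compl, Fintype.card_subtype_compl, card_lt_subtype p q, hcount]
  set σ : Equiv.Perm (Fin (p + q)) :=
    Equiv.subtypeCongr (Fintype.equivOfCardEq hcard1) (Fintype.equivOfCardEq hcard2) with hσdef
  have hσ : ∀ i, 0 < μ (σ i) ↔ (i : ℕ) < p := fun i =>
    subtypeCongr_prop _ _ (Fintype.equivOfCardEq hcard1) (Fintype.equivOfCardEq hcard2) i
  -- reordered spectral decomposition
  set ν : Fin (p + q) → ℝ := μ ∘ σ with hνdef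
  set U := U₀.submatrix id ⇑σ with hUdef
  have hUspec : U * diagonal ν * Uᵀ = A := by
    rw [hUdef, transpose_submatrix, hνdef, ← submatrix_diagonal_equiv μ σ,
      submatrix_mul_equiv, submatrix_mul_equiv, submatrix_id_id, hspec]
  have hUl : Uᵀ * U = 1 := by
    rw [hUdef, transpose_submatrix, ← submatrix_mul U₀ᵀ U₀ (⇑σ) id (⇑σ) Function.bijective_id,
      hU₀l, submatrix_one_equiv]
  have hUr : U * Uᵀ = 1 := by
    rw [hUdef, transpose_submatrix, ← submatrix_mul U₀ U₀ᵀ id (⇑σ) id σ.bijective,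
      hU₀r, submatrix_id_id]
  have hdetU : U.det ≠ 0 := by
    intro h0
    have hd : Uᵀ.det * U.det = 1 := by rw [← det_mul, hUl, det_one]
    rw [det_transpose, h0, mul_zero] at hd
    exact zero_ne_one hd
  -- the congruence matrix
  set M := C * U with hMdef
  have hdetM : IsUnit M.det := by
    rw [hMdef, det_mul]
    exact isUnit_iff_ne_zero.mpr (mul_ne_zero hdetC hdetU)
  have hMS : M * Mᵀ = S := by
    rw [hMdef, transpose_mul, hC2]
    have : C * U * (Uᵀ * C) = C * (U * Uᵀ) * C := by simp only [Matrix.mul_assoc]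
    rw [this, hUr, Matrix.mul_one, hC1]
  have hcong2 : Mᵀ * J * M = diagonal ν := by
    have e1 : Mᵀ * J * M = Uᵀ * (C * J * C) * U := by
      rw [hMdef, transpose_mul, hC2]
      simp only [Matrix.mul_assoc]
    have e2 : Uᵀ * A * U = diagonal ν := by
      rw [← hUspec]
      simp only [Matrix.mul_assoc]
      rw [hUl, Matrix.mul_one, ← Matrix.mul_assoc, hUl, Matrix.one_mul]
    rw [e1, ← hAdef, e2]
  have hνne : ∀ i, ν i ≠ 0 := fun i => hμne (σ i)
  -- the diagonal entries
  set d : Fin (p + q) → ℝ := fun i => |ν i| with hddef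
  have hd : ∀ i, 0 < d i := fun i => abs_pos.mpr (hνne i)
  have hsign : ∀ i, jf i * d i = ν i := by
    intro i
    by_cases h : (i : ℕ) < p
    · have hpos : 0 < ν i := (hσ i).mpr h
      simp [hjf, hddef, h, abs_of_pos hpos]
    · have hneg : ν i < 0 := lt_of_le_of_ne (not_lt.mp fun hc => h ((hσ i).mp hc)) (hνne i)
      simp [hjf, hddef, h, abs_of_neg hneg]
  set f : Fin (p + q) → ℝ := fun i => (Real.sqrt (d i))⁻¹ with hfdef
  have hsq : ∀ i, Real.sqrt (d i) * Real.sqrt (d i) = d i :=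
    fun i => Real.mul_self_sqrt (le_of_lt (hd i))
  have hs0 : ∀ i, Real.sqrt (d i) ≠ 0 := fun i => ne_of_gt (Real.sqrt_pos.mpr (hd i))
  set F : Matrix (Fin (p + q)) (Fin (p + q)) ℝ := diagonal f with hFdef
  set V := F * Mᵀ with hVdef
  have hVT : Vᵀ = M * F := by
    rw [hVdef, transpose_mul, transpose_transpose, hFdef, diagonal_transpose]
  have sandwich : ∀ X : Matrix (Fin (p + q)) (Fin (p + q)) ℝ,
      Vᵀ * X * V = M * (F * X * F) * Mᵀ := by
    intro X
    rw [hVT, hVdef]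
    simp only [Matrix.mul_assoc]
  refine ⟨V, d, ?_, hd, ?_⟩
  · -- V is J-orthogonal
    show Vᵀ * J * V = J
    rw [sandwich J]
    have hff : ∀ i, f i * f i = (d i)⁻¹ := by
      intro i
      rw [hfdef]
      show (Real.sqrt (d i))⁻¹ * (Real.sqrt (d i))⁻¹ = (d i)⁻¹
      rw [← mul_inv, hsq i]
    have hFJF : F * J * F = diagonal (fun i => (ν i)⁻¹) := by
      have hentry : (fun i => f i * jf i * f i) = fun i => (ν i)⁻¹ := by
        funext i
        have hjinv : (jf i)⁻¹ = jf i := by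
          by_cases h : (i : ℕ) < p <;> simp [hjf, h] <;> norm_num
        calc f i * jf i * f i = jf i * (f i * f i) := by ring
          _ = jf i * (d i)⁻¹ := by rw [hff i]
          _ = (jf i)⁻¹ * (d i)⁻¹ := by rw [hjinv]
          _ = (jf i * d i)⁻¹ := (mul_inv _ _).symm
          _ = (ν i)⁻¹ := by rw [hsign i]
      rw [hFdef, hJdef, diagonal_mul_diagonal, diagonal_mul_diagonal, hentry]
    rw [hFJF]
    have hνinv : diagonal (fun i => (ν i)⁻¹) * diagonal ν = 1 := by
      rw [diagonal_mul_diagonal,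
        show (fun i => (ν i)⁻¹ * ν i) = fun _ => (1:ℝ) from
          funext fun i => inv_mul_cancel₀ (hνne i), diagonal_one]
    have hX : M * diagonal (fun i => (ν i)⁻¹) * Mᵀ * J * M = M := by
      have e1 : M * diagonal (fun i => (ν i)⁻¹) * Mᵀ * J * M
          = M * (diagonal (fun i => (ν i)⁻¹) * (Mᵀ * J * M)) := by
        simp only [Matrix.mul_assoc]
      rw [e1, hcong2, hνinv, Matrix.mul_one]
    have hXJ : M * diagonal (fun i => (ν i)⁻¹) * Mᵀ * J = 1 := by
      have := congrArg (· * M⁻¹) hX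
      rw [Matrix.mul_assoc _ M M⁻¹, Matrix.mul_nonsing_inv _ hdetM, Matrix.mul_one] at this
      exact this
    calc M * diagonal (fun i => (ν i)⁻¹) * Mᵀ
        = M * diagonal (fun i => (ν i)⁻¹) * Mᵀ * (J * J) := by rw [hJJ, Matrix.mul_one]
      _ = (M * diagonal (fun i => (ν i)⁻¹) * Mᵀ * J) * J := by simp only [Matrix.mul_assoc]
      _ = J := by rw [hXJ, Matrix.one_mul]
  · -- S is recovered
    have hff : ∀ i, f i * f i = (d i)⁻¹ := by
      intro i
      rw [hfdef]
      show (Real.sqrt (d i))⁻¹ * (Real.sqrt (d i))⁻¹ = (d i)⁻¹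
      rw [← mul_inv, hsq i]
    have hFdF : F * diagonal d * F = 1 := by
      have hentry : (fun i => f i * d i * f i) = fun _ => (1:ℝ) := by
        funext i
        calc f i * d i * f i = d i * (f i * f i) := by ring
          _ = d i * (d i)⁻¹ := by rw [hff i]
          _ = 1 := mul_inv_cancel₀ (ne_of_gt (hd i))
      rw [hFdef, diagonal_mul_diagonal, diagonal_mul_diagonal, hentry, diagonal_one]
    rw [sandwich, hFdF, Matrix.mul_one, hMS]
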